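/- For every t_1,...,t_k ∈ {1,...,n} and k-indexes I, J, K, L, the product (z_{t_1} − z'_{t_1})⋯(z_{t_k} − z'_{t_k})·det(M_{IJ})·det(M'_{KL}) lies in the ideal I_{2k}(M_D) of 2k×2k minors of a generator matrix of the double M_D. -/
import Mathlib


/-- The generator matrix `[M_D] = [[M], 0; [M]', Δ·[M]']` of the double `M_D`, where
`[M]` has columns `g j` and the right-hand block has columns
`(z i − z' i)·(j-th column of [M]')`. Rows are `Fin p ⊕ Fin p`, columns are
`Fin r ⊕ Fin n × Fin r`. -/
def Lip.doubleMatrix {R S : Type*} [CommRing R] [CommRing S] {p r n : ℕ}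
    (φ1 φ2 : R →+* S) (z : Fin n → R) (g : Fin r → (Fin p → R)) :
    Matrix (Fin p ⊕ Fin p) (Fin r ⊕ Fin n × Fin r) S :=
  fun i c =>
    match i, c with
    | Sum.inl i, Sum.inl j => φ1 (g j i)
    | Sum.inr i, Sum.inl j => φ2 (g j i)
    | Sum.inl _, Sum.inr _ => 0
    | Sum.inr i, Sum.inr (a, j) => (φ1 (z a) - φ2 (z a)) * φ2 (g j i)

/-- The ideal `I_{2k}(M_D)` of `2k×2k` minors of the generator matrix of the double. -/
def Lip.I2k {R S : Type*} [CommRing R] [CommRing S] {p r n : ℕ}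
    (φ1 φ2 : R →+* S) (z : Fin n → R) (g : Fin r → (Fin p → R)) (k : ℕ) : Ideal S :=
  Ideal.span {d : S | ∃ (RI : Fin (2 * k) → Fin p ⊕ Fin p)
      (CJ : Fin (2 * k) → Fin r ⊕ Fin n × Fin r),
    d = Matrix.det (Matrix.of fun a b : Fin (2 * k) =>
      Lip.doubleMatrix φ1 φ2 z g (RI a) (CJ b))}

/-- For all `t : Fin k → Fin n` and `k`-indexes `I, J, K, L`, the product
`(z t₁ − z' t₁) ⋯ (z tₖ − z' tₖ) · det(M_{IJ}) · det(M'_{KL})` lies in `I_{2k}(M_D)`. -/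
theorem prod_det_mem_I2k {R S : Type*} [CommRing R] [CommRing S] {p r n k : ℕ}
    (φ1 φ2 : R →+* S) (z : Fin n → R) (g : Fin r → (Fin p → R))
    (t : Fin k → Fin n) (I K : Fin k → Fin p) (J L : Fin k → Fin r) :
    (∏ l, (φ1 (z (t l)) - φ2 (z (t l))))
      * Matrix.det (Matrix.of fun a b : Fin k => φ1 (g (J b) (I a)))
      * Matrix.det (Matrix.of fun a b : Fin k => φ2 (g (L b) (K a)))
      ∈ Lip.I2k φ1 φ2 z g k := by
  apply Ideal.subset_span
  let e : Fin (2 * k) ≃ Fin k ⊕ Fin k := (finCongr (two_mul k)).trans finSumFinEquiv.symm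
  refine ⟨fun a => Sum.elim (fun i => Sum.inl (I i)) (fun i => Sum.inr (K i)) (e a),
    fun b => Sum.elim (fun j => Sum.inl (J j)) (fun j => Sum.inr (t j, L j)) (e b), ?_⟩
  have h1 : (Matrix.of fun a b : Fin (2 * k) =>
      Lip.doubleMatrix φ1 φ2 z g
        (Sum.elim (fun i => Sum.inl (I i)) (fun i => Sum.inr (K i)) (e a))
        (Sum.elim (fun j => Sum.inl (J j)) (fun j => Sum.inr (t j, L j)) (e b)))
      = Matrix.submatrix
        (Matrix.fromBlocks
          (Matrix.of fun a b : Fin k => φ1 (g (J b) (I a)))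
          (0 : Matrix (Fin k) (Fin k) S)
          (Matrix.of fun a b : Fin k => φ2 (g (J b) (K a)))
          (Matrix.of fun a b : Fin k => (φ1 (z (t b)) - φ2 (z (t b))) * φ2 (g (L b) (K a))))
        e e := by
    ext a b
    rcases h : e a with i | i <;> rcases h' : e b with j | j <;>
      simp [Lip.doubleMatrix, Matrix.fromBlocks, h, h']
  rw [h1, Matrix.det_submatrix_equiv_self, Matrix.det_fromBlocks_zero₁₂]
  have h2 : (Matrix.of fun a b : Fin k =>
      (φ1 (z (t b)) - φ2 (z (t b))) * φ2 (g (L b) (K a))).det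
      = (∏ l, (φ1 (z (t l)) - φ2 (z (t l))))
        * Matrix.det (Matrix.of fun a b : Fin k => φ2 (g (L b) (K a))) := by
    exact Matrix.det_mul_row (fun b => φ1 (z (t b)) - φ2 (z (t b))) _
  rw [h2]; ring
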